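/- arXiv:2103.04161 — 3 statements merged into one kernel-verified Lean document; each statement's English description precedes it below -/
import Mathlib

section
/- If {T_r}_{r>0} with T_r = r^E is a contracting continuous one-parameter group on R^d, then E is invertible and tr(E) > 0. -/
open MeasureTheory Filter Set

open Finset

/-- Jacobi's formula at the identity. -/
lemma hasDerivAt_det_at_one {n : ℕ} (c : ℝ → Matrix (Fin n) (Fin n) ℝ)
    (A : Matrix (Fin n) (Fin n) ℝ) (t₀ : ℝ)
    (hc : ∀ i j, HasDerivAt (fun t => c t i j) (A i j) t₀) (h1 : c t₀ = 1) :
    HasDerivAt (fun t => (c t).det) A.trace t₀ := by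
  have main : ∀ σ : Equiv.Perm (Fin n), HasDerivAt (fun t => ∏ i, c t (σ i) i)
      (∑ i, (∏ j ∈ Finset.univ.erase i, c t₀ (σ j) j) • A (σ i) i) t₀ := by
    intro σ
    exact HasDerivAt.fun_finsetProd (fun i _ => hc (σ i) i)
  have key : ∀ σ : Equiv.Perm (Fin n),
      (∑ i, (∏ j ∈ Finset.univ.erase i, c t₀ (σ j) j) • A (σ i) i)
        = if σ = 1 then A.trace else 0 := by
    intro σ
    by_cases hσ : σ = 1
    · subst hσ
      simp [h1, Matrix.one_apply_eq, Matrix.trace, Matrix.diag]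
    · rw [if_neg hσ]
      apply Finset.sum_eq_zero
      intro i _
      obtain ⟨i₀, hi₀⟩ : ∃ i₀, σ i₀ ≠ i₀ := by
        by_contra hall
        push_neg at hall
        exact hσ (Equiv.ext fun j => hall j)
      rcases eq_or_ne i i₀ with rfl | hne
      · -- use i₁ := σ i
        have hi₁ : σ (σ i) ≠ σ i := fun hcon => hi₀ (σ.injective hcon)
        have hmem : σ i ∈ Finset.univ.erase i :=
          Finset.mem_erase.2 ⟨hi₀, Finset.mem_univ _⟩
        have : (∏ j ∈ Finset.univ.erase i, c t₀ (σ j) j) = 0 :=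
          Finset.prod_eq_zero hmem (by rw [h1]; exact Matrix.one_apply_ne hi₁)
        rw [this, zero_smul]
      · have hmem : i₀ ∈ Finset.univ.erase i :=
          Finset.mem_erase.2 ⟨hne.symm, Finset.mem_univ _⟩
        have : (∏ j ∈ Finset.univ.erase i, c t₀ (σ j) j) = 0 :=
          Finset.prod_eq_zero hmem (by rw [h1]; exact Matrix.one_apply_ne hi₀)
        rw [this, zero_smul]
  have hdet : ∀ t, (c t).det = ∑ σ : Equiv.Perm (Fin n),
      ((Equiv.Perm.sign σ : ℤ) : ℝ) * ∏ i, c t (σ i) i := fun t => Matrix.det_apply' (c t)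
  have := HasDerivAt.fun_sum (u := Finset.univ)
    (A := fun (σ : Equiv.Perm (Fin n)) t => ((Equiv.Perm.sign σ : ℤ) : ℝ) * ∏ i, c t (σ i) i)
    (A' := fun σ => ((Equiv.Perm.sign σ : ℤ) : ℝ) *
      (∑ i, (∏ j ∈ Finset.univ.erase i, c t₀ (σ j) j) • A (σ i) i))
    (fun σ _ => (main σ).const_mul _)
  have heq : (fun t => (c t).det)
      = fun t => ∑ σ ∈ Finset.univ, ((Equiv.Perm.sign σ : ℤ) : ℝ) * ∏ i, c t (σ i) i := by
    funext t; exact hdet t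
  rw [heq]
  refine this.congr_deriv ?_
  have : ∀ σ : Equiv.Perm (Fin n), ((Equiv.Perm.sign σ : ℤ) : ℝ) *
      (∑ i, (∏ j ∈ Finset.univ.erase i, c t₀ (σ j) j) • A (σ i) i)
      = if σ = 1 then A.trace else 0 := by
    intro σ
    rw [key σ]
    by_cases hσ : σ = 1 <;> simp [hσ]
  rw [Finset.sum_congr rfl (fun σ _ => this σ)]
  simp

set_option maxHeartbeats 1000000 in
set_option synthInstance.maxHeartbeats 200000 in
open NormedSpace in
/-- `det (exp (t • E)) = exp (t * tr E)` via the ODE argument. -/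
lemma det_exp_eq {d : ℕ}
    (E : EuclideanSpace ℝ (Fin d) →L[ℝ] EuclideanSpace ℝ (Fin d)) :
    ∀ t : ℝ,
      (LinearMap.toMatrix (EuclideanSpace.basisFun (Fin d) ℝ).toBasis
          (EuclideanSpace.basisFun (Fin d) ℝ).toBasis
          ((NormedSpace.exp (t • E) : _ →L[ℝ] _) : _ →ₗ[ℝ] _)).det
        = Real.exp (t * LinearMap.trace ℝ (EuclideanSpace ℝ (Fin d))
            (E : _ →ₗ[ℝ] _)) := by
  set X := EuclideanSpace ℝ (Fin d)
  set b : Module.Basis (Fin d) ℝ X := (EuclideanSpace.basisFun (Fin d) ℝ).toBasis with hb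
  set Mlin : (X →L[ℝ] X) →ₗ[ℝ] Matrix (Fin d) (Fin d) ℝ :=
    (LinearMap.toMatrix b b).toLinearMap ∘ₗ ContinuousLinearMap.coeLM ℝ with hM
  set τ : ℝ := LinearMap.trace ℝ X (E : X →ₗ[ℝ] X) with hτ
  set g : ℝ → ℝ := fun t => (Mlin (NormedSpace.exp (t • E))).det with hg
  have hlin : ∀ (L : (X →L[ℝ] X) →ₗ[ℝ] ℝ) {c : ℝ → (X →L[ℝ] X)} {c' : X →L[ℝ] X} {t₀ : ℝ},
      HasDerivAt c c' t₀ → HasDerivAt (fun t => L (c t)) (L c') t₀ := by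
    intro L c c' t₀ h
    simpa [Function.comp_def] using (LinearMap.toContinuousLinearMap L).hasFDerivAt.comp_hasDerivAt t₀ h
  -- trace of Mlin E is τ
  have htr : (Mlin E).trace = τ := (LinearMap.trace_eq_matrix_trace ℝ b _).symm
  -- Mlin is multiplicative, unital
  have hMone : Mlin 1 = 1 := by
    show LinearMap.toMatrix b b (ContinuousLinearMap.coeLM ℝ (1 : X →L[ℝ] X)) = 1
    rw [show (ContinuousLinearMap.coeLM ℝ (1 : X →L[ℝ] X)) = LinearMap.id from rfl,
      LinearMap.toMatrix_id]
  have hMmul : ∀ f g : X →L[ℝ] X, Mlin (f * g) = Mlin f * Mlin g := by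
    intro f g
    simp only [hM, LinearMap.comp_apply]
    rw [show (ContinuousLinearMap.coeLM ℝ (f * g)) =
      (ContinuousLinearMap.coeLM ℝ f) ∘ₗ (ContinuousLinearMap.coeLM ℝ g) from rfl]
    exact LinearMap.toMatrix_comp b b b _ _
  -- g 0 = 1
  have hexp0 : NormedSpace.exp ((0:ℝ) • E) = 1 := by
    rw [zero_smul ℝ E, NormedSpace.exp_zero]
  have hg0 : g 0 = 1 := by
    show (Mlin (NormedSpace.exp ((0:ℝ) • E))).det = 1
    rw [hexp0, hMone, Matrix.det_one]
  -- derivative at 0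
  have hder0 : HasDerivAt g (Mlin E).trace 0 := by
    apply hasDerivAt_det_at_one (fun t => Mlin (NormedSpace.exp (t • E))) (Mlin E) 0
    · intro i j
      have hexp : HasDerivAt (fun t : ℝ => NormedSpace.exp (t • E)) E 0 := by
        have := hasDerivAt_exp_smul_const (𝕂 := ℝ) E 0
        rwa [hexp0, one_mul] at this
      exact hlin ((Matrix.entryLinearMap ℝ ℝ i j) ∘ₗ Mlin) hexp
    · rw [hexp0]; exact hMone
  -- group property
  have hgrp : ∀ s t : ℝ, g (s + t) = g s * g t := by
    intro s t
    have hcomm : Commute (s • E) (t • E) := by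
      ext x
      simp [ContinuousLinearMap.mul_apply, _root_.map_smul, smul_smul]
      ring_nf; simp
    have : NormedSpace.exp ((s + t) • E)
        = NormedSpace.exp (s • E) * NormedSpace.exp (t • E) := by
      rw [add_smul s t E]; exact NormedSpace.exp_add_of_commute_of_mem_ball (𝕂 := ℝ) hcomm ((NormedSpace.expSeries_radius_eq_top ℝ (X →L[ℝ] X)).symm ▸ edist_lt_top _ _) ((NormedSpace.expSeries_radius_eq_top ℝ (X →L[ℝ] X)).symm ▸ edist_lt_top _ _)
    rw [hg]
    simp only [this, hMmul, Matrix.det_mul]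
  -- derivative everywhere
  have hder : ∀ t₀ : ℝ, HasDerivAt g (g t₀ * τ) t₀ := by
    intro t₀
    have heq : (fun t => g t₀ * g (t - t₀)) = g := by
      funext t
      rw [← hgrp t₀ (t - t₀)]
      ring_nf
    have hder0' : HasDerivAt g (Mlin E).trace (t₀ - t₀) := by simpa using hder0
    have hsub : HasDerivAt (fun t : ℝ => t - t₀) 1 t₀ := (hasDerivAt_id t₀).sub_const t₀
    have hinner := HasDerivAt.comp (h := fun t : ℝ => t - t₀) t₀ hder0' hsub
    have h' : HasDerivAt (fun t => g t₀ * g (t - t₀)) (g t₀ * τ) t₀ := by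
      have := hinner.const_mul (g t₀)
      simpa [htr, Function.comp_def] using this
    exact h'.congr_of_eventuallyEq
      (Filter.Eventually.of_forall fun t => (congrFun heq t).symm)
  -- solve the ODE
  intro t
  have hφ : ∀ u : ℝ, HasDerivAt (fun t => g t * Real.exp (-(τ * t))) 0 u := by
    intro u
    have h1 : HasDerivAt (fun t : ℝ => Real.exp (-(τ * t))) (-τ * Real.exp (-(τ * u))) u := by
      have : HasDerivAt (fun t : ℝ => -(τ * t)) (-τ) u := by
        simpa using ((hasDerivAt_id u).const_mul τ).fun_neg
      simpa [mul_comm, Function.comp_def] using (Real.hasDerivAt_exp (-(τ * u))).comp u this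
    have := (hder u).mul h1
    refine this.congr_deriv ?_
    ring
  have hconst : ∀ u : ℝ, g u * Real.exp (-(τ * u)) = g 0 * Real.exp (-(τ * 0)) := by
    intro u
    exact is_const_of_deriv_eq_zero (fun x => (hφ x).differentiableAt)
      (fun x => (hφ x).deriv) u 0
  have := hconst t
  rw [hg0] at this
  have h2 : g t * Real.exp (-(τ * t)) = 1 := by
    simpa using this
  have h3 : g t * (Real.exp (-(τ * t)) * Real.exp (τ * t)) = Real.exp (τ * t) := by
    rw [← mul_assoc, h2, one_mul]
  rw [← Real.exp_add, neg_add_cancel, Real.exp_zero, mul_one] at h3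
  simpa [hg, hM, mul_comm] using h3


/-- The continuous one-parameter group `T_r = r^E = exp((ln r) E)` generated by an
endomorphism `E` of `ℝ^d`. -/
noncomputable def Tgrp {d : ℕ} (E : EuclideanSpace ℝ (Fin d) →L[ℝ] EuclideanSpace ℝ (Fin d))
    (r : ℝ) : EuclideanSpace ℝ (Fin d) →L[ℝ] EuclideanSpace ℝ (Fin d) :=
  NormedSpace.exp (Real.log r • E)

/-- The group `{T_r}` is contracting: `‖T_r‖ → 0` as `r → 0⁺` (operator norm). -/
def IsContracting {d : ℕ} (E : EuclideanSpace ℝ (Fin d) →L[ℝ] EuclideanSpace ℝ (Fin d)) : Prop :=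
  Tendsto (fun r : ℝ => ‖Tgrp E r‖) (nhdsWithin 0 (Set.Ioi 0)) (nhds 0)

/-- If `{T_r} = {r^E}` is a contracting continuous one-parameter group on `ℝ^d`,
then `E` is invertible and `tr E > 0`. -/
theorem contracting_generator_invertible_and_trace_pos {d : ℕ} (hd : 0 < d)
    (E : EuclideanSpace ℝ (Fin d) →L[ℝ] EuclideanSpace ℝ (Fin d))
    (h : IsContracting E) :
    Function.Bijective E ∧
      0 < LinearMap.trace ℝ (EuclideanSpace ℝ (Fin d)) (E : EuclideanSpace ℝ (Fin d) →ₗ[ℝ] EuclideanSpace ℝ (Fin d)) := by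
  set X := EuclideanSpace ℝ (Fin d)
  haveI : Nonempty (Fin d) := ⟨⟨0, hd⟩⟩
  -- pick a small r₀ with ‖Tgrp E r₀‖ < 1/2
  obtain ⟨r₀, hr₀⟩ : ∃ r, ‖Tgrp E r‖ < 1 / 2 :=
    (h.eventually (gt_mem_nhds (by norm_num : (0:ℝ) < 1 / 2))).exists
  -- kernel is trivial
  have hker : ∀ x : X, E x = 0 → x = 0 := by
    intro x hx
    have hderx : ∀ t : ℝ, HasDerivAt (fun t : ℝ => NormedSpace.exp (t • E) x) 0 t := by
      intro t
      have h1 := hasDerivAt_exp_smul_const (𝕂 := ℝ) E t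
      have h2 := (ContinuousLinearMap.apply ℝ X x).hasFDerivAt.comp_hasDerivAt t h1
      have h3 : (ContinuousLinearMap.apply ℝ X x) (NormedSpace.exp (t • E) * E) = 0 := by
        simp [ContinuousLinearMap.mul_apply, hx]
      simpa [h3, Function.comp_def] using h2
    have hconst : ∀ t : ℝ, NormedSpace.exp (t • E) x = x := by
      intro t
      have := is_const_of_deriv_eq_zero (fun u => (hderx u).differentiableAt)
        (fun u => (hderx u).deriv) t 0
      rwa [zero_smul ℝ E, NormedSpace.exp_zero, ContinuousLinearMap.one_apply] at this
    have hx1 : ‖x‖ = ‖Tgrp E r₀ x‖ := by rw [Tgrp, hconst (Real.log r₀)]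
    have hx2 : ‖Tgrp E r₀ x‖ ≤ ‖Tgrp E r₀‖ * ‖x‖ := (Tgrp E r₀).le_opNorm x
    have hx0 : ‖x‖ ≤ 0 := by nlinarith [norm_nonneg x, norm_nonneg (Tgrp E r₀)]
    exact norm_le_zero_iff.mp hx0
  have hinj : Function.Injective E := by
    intro x y hxy
    have h0 : E (x - y) = 0 := by rw [map_sub, hxy, sub_self]
    exact sub_eq_zero.mp (hker _ h0)
  have hinjL : Function.Injective (E : X →ₗ[ℝ] X) := hinj
  have hsurj : Function.Surjective E :=
    LinearMap.injective_iff_surjective.mp hinjL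
  refine ⟨⟨hinj, hsurj⟩, ?_⟩
  -- trace positivity
  set τ : ℝ := LinearMap.trace ℝ X (E : X →ₗ[ℝ] X) with hτdef
  by_contra hτ
  push_neg at hτ
  -- the determinant function
  set b : Module.Basis (Fin d) ℝ X := (EuclideanSpace.basisFun (Fin d) ℝ).toBasis with hb
  set Mlin : (X →L[ℝ] X) →ₗ[ℝ] Matrix (Fin d) (Fin d) ℝ :=
    (LinearMap.toMatrix b b).toLinearMap ∘ₗ ContinuousLinearMap.coeLM ℝ with hM
  have hcontM : Continuous Mlin := Mlin.continuous_of_finiteDimensional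
  have hcontF : Continuous fun f : X →L[ℝ] X => (Mlin f).det :=
    (Continuous.matrix_det hcontM)
  -- Tgrp tends to 0
  have hT0 : Tendsto (fun r : ℝ => Tgrp E r) (nhdsWithin 0 (Set.Ioi 0)) (nhds 0) := by
    rw [tendsto_zero_iff_norm_tendsto_zero]
    exact h
  have hdet0 : Tendsto (fun r : ℝ => (Mlin (Tgrp E r)).det)
      (nhdsWithin 0 (Set.Ioi 0)) (nhds 0) := by
    have := (hcontF.tendsto 0).comp hT0
    simpa [map_zero, Matrix.det_zero, Function.comp_def] using this
  have hev : ∀ᶠ r in nhdsWithin (0:ℝ) (Set.Ioi 0), (Mlin (Tgrp E r)).det < 1 :=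
    hdet0.eventually (gt_mem_nhds one_pos)
  have hev2 : ∀ᶠ r in nhdsWithin (0:ℝ) (Set.Ioi 0), r ∈ Set.Ioo (0:ℝ) 1 :=
    Ioo_mem_nhdsGT_of_mem ⟨le_refl 0, one_pos⟩
  obtain ⟨r, hr1, hr2⟩ := (hev.and hev2).exists
  have hform : (Mlin (Tgrp E r)).det = Real.exp (Real.log r * τ) := det_exp_eq E (Real.log r)
  have hlog : Real.log r ≤ 0 := Real.log_nonpos (le_of_lt hr2.1) (le_of_lt hr2.2)
  have hge : (1:ℝ) ≤ Real.exp (Real.log r * τ) := by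
    rw [Real.one_le_exp_iff]
    nlinarith
  rw [hform] at hr1
  linarith
end

section
/- Let P : R^d → R be continuous, positive definite (P ≥ 0 and P(x)=0 iff x=0), and suppose there exists E ∈ End(R^d) with P(r^E x) = r P(x) for all r > 0 and x ∈ R^d. Then the following are equivalent: (a) the level set S = {η : P(η) = 1} is compact; (b) there is M > 0 such that P(x) > 1 for all |x| ≥ M; (c) for every such exponent E the group r^E is contracting; (d) there exists such an exponent E for which r^E is contracting; (e) P(x) → ∞ as |x| → ∞. -/
open MeasureTheory Filter Set

set_option synthInstance.maxHeartbeats 1000000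
set_option maxHeartbeats 1000000

/-- `E` is an exponent of `P`: `P(r^E x) = r · P(x)` for all `r > 0` and `x ∈ ℝ^d`. -/
def IsExpOf {d : ℕ} (P : EuclideanSpace ℝ (Fin d) → ℝ)
    (E : EuclideanSpace ℝ (Fin d) →L[ℝ] EuclideanSpace ℝ (Fin d)) : Prop :=
  ∀ r : ℝ, 0 < r → ∀ x : EuclideanSpace ℝ (Fin d), P (Tgrp E r x) = r * P x


variable {d : ℕ} (E : EuclideanSpace ℝ (Fin d) →L[ℝ] EuclideanSpace ℝ (Fin d))

lemma Tgrp_mul {r s : ℝ} (hr : 0 < r) (hs : 0 < s) :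
    Tgrp E (r * s) = Tgrp E r * Tgrp E s := by
  have hcomm : Commute (Real.log r • E) (Real.log s • E) := by
    show _ * _ = _ * _
    ext v
    simp [ContinuousLinearMap.mul_apply, _root_.map_smul, smul_smul]; ring_nf; simp
  have h1 : Real.log (r*s) • E = Real.log r • E + Real.log s • E := by
    rw [Real.log_mul hr.ne' hs.ne']; exact add_smul (Real.log r) (Real.log s) E
  letI : NormedAlgebra ℚ (EuclideanSpace ℝ (Fin d) →L[ℝ] EuclideanSpace ℝ (Fin d)) :=
    NormedAlgebra.restrictScalars ℚ ℝ _
  rw [Tgrp, Tgrp, Tgrp, h1, NormedSpace.exp_add_of_commute hcomm]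

lemma Tgrp_one : Tgrp E 1 = 1 := by
  have h0 : Real.log 1 • E = 0 := by rw [Real.log_one]; exact zero_smul ℝ E
  rw [Tgrp, h0, NormedSpace.exp_zero]

lemma Tgrp_one_apply (x : EuclideanSpace ℝ (Fin d)) : Tgrp E 1 x = x := by
  rw [Tgrp_one]; rfl

lemma Tgrp_mul_apply {r s : ℝ} (hr : 0 < r) (hs : 0 < s) (x : EuclideanSpace ℝ (Fin d)) :
    Tgrp E r (Tgrp E s x) = Tgrp E (r * s) x := by
  rw [Tgrp_mul E hr hs]; rfl

lemma Tgrp_inv_apply {r : ℝ} (hr : 0 < r) (x : EuclideanSpace ℝ (Fin d)) :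
    Tgrp E r⁻¹ (Tgrp E r x) = x := by
  rw [Tgrp_mul_apply E (inv_pos.mpr hr) hr, inv_mul_cancel₀ hr.ne', Tgrp_one_apply]

lemma Tgrp_inv_apply' {r : ℝ} (hr : 0 < r) (x : EuclideanSpace ℝ (Fin d)) :
    Tgrp E r (Tgrp E r⁻¹ x) = x := by
  rw [Tgrp_mul_apply E hr (inv_pos.mpr hr), mul_inv_cancel₀ hr.ne', Tgrp_one_apply]

lemma continuousOn_Tgrp : ContinuousOn (fun r : ℝ => Tgrp E r) (Ioi 0) := by
  have h1 : ContinuousOn (fun r : ℝ => Real.log r • E) (Ioi 0) := by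
    apply ContinuousOn.fun_smul _ continuousOn_const
    exact Real.continuousOn_log.mono (fun x hx => ne_of_gt hx)
  letI : NormedAlgebra ℚ (EuclideanSpace ℝ (Fin d) →L[ℝ] EuclideanSpace ℝ (Fin d)) :=
    NormedAlgebra.restrictScalars ℚ ℝ _
  exact NormedSpace.exp_continuous.comp_continuousOn h1

lemma opnorm_le_unit {T : EuclideanSpace ℝ (Fin d) →L[ℝ] EuclideanSpace ℝ (Fin d)} {c : ℝ}
    (hc : 0 ≤ c) (h : ∀ u : EuclideanSpace ℝ (Fin d), ‖u‖ = 1 → ‖T u‖ ≤ c) : ‖T‖ ≤ c := by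
  apply T.opNorm_le_bound hc
  intro x
  rcases eq_or_ne x 0 with rfl | hx
  · simp
  · have hxn : (0:ℝ) < ‖x‖ := norm_pos_iff.mpr hx
    have hu : ‖(‖x‖⁻¹ • x)‖ = 1 := by
      rw [norm_smul, Real.norm_eq_abs, abs_of_nonneg (inv_nonneg.mpr hxn.le)]
      field_simp
    have h2 := h _ hu
    rw [_root_.map_smul, norm_smul, Real.norm_eq_abs, abs_of_nonneg (inv_nonneg.mpr hxn.le)] at h2
    calc ‖T x‖ = ‖x‖ * (‖x‖⁻¹ * ‖T x‖) := by field_simp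
    _ ≤ ‖x‖ * c := by nlinarith
    _ = c * ‖x‖ := mul_comm _ _


section main

variable {P : EuclideanSpace ℝ (Fin d) → ℝ}

lemma P_pos (hnn : ∀ x, 0 ≤ P x) (hpd : ∀ x, P x = 0 → x = 0)
    {x : EuclideanSpace ℝ (Fin d)} (hx : x ≠ 0) : 0 < P x :=
  (hnn x).lt_of_ne (fun h => hx (hpd x h.symm))

lemma quant (hc : Continuous P) (hnn : ∀ x, 0 ≤ P x) (hpd : ∀ x, P x = 0 → x = 0)
    (hE : IsExpOf P E) (hnt : Nontrivial (EuclideanSpace ℝ (Fin d))) :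
    ∀ ε : ℝ, 0 < ε → ∃ δ : ℝ, 0 < δ ∧ ∀ s : ℝ, 0 < s → s < δ → ‖Tgrp E s‖ < ε := by
  obtain ⟨u₀, hu₀, hmin⟩ := (isCompact_sphere (0 : EuclideanSpace ℝ (Fin d)) 1).exists_isMinOn
    (NormedSpace.sphere_nonempty.mpr zero_le_one) hc.continuousOn
  obtain ⟨u₁, hu₁, hmax⟩ := (isCompact_closedBall (0 : EuclideanSpace ℝ (Fin d)) 1).exists_isMaxOn
    ⟨0, by simp⟩ hc.continuousOn
  set m := P u₀ with hm_def
  set M := P u₁ with hM_def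
  have hu₀n : ‖u₀‖ = 1 := mem_sphere_zero_iff_norm.mp hu₀
  have hm : 0 < m := P_pos hnn hpd (by intro h; rw [h, norm_zero] at hu₀n; norm_num at hu₀n)
  have hsph : ∀ u : EuclideanSpace ℝ (Fin d), ‖u‖ = 1 → m ≤ P u :=
    fun u hu => isMinOn_iff.mp hmin u (mem_sphere_zero_iff_norm.mpr hu)
  have hball : ∀ u : EuclideanSpace ℝ (Fin d), ‖u‖ ≤ 1 → P u ≤ M :=
    fun u hu => isMaxOn_iff.mp hmax u (mem_closedBall_zero_iff.mpr hu)
  have hM : 0 < M := lt_of_lt_of_le hm (hball u₀ hu₀n.le)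
  -- claim 1 : for s < m/M the operator contracts the unit sphere into the ball
  have claim1 : ∀ s : ℝ, 0 < s → s < m / M → ∀ u : EuclideanSpace ℝ (Fin d),
      ‖u‖ = 1 → ‖Tgrp E s u‖ ≤ 1 := by
    intro s hs0 hs u hu
    by_contra hgt
    push_neg at hgt
    have hvpos : (0:ℝ) < ‖Tgrp E s u‖ := lt_trans one_pos hgt
    set c : ℝ := ‖Tgrp E s u‖⁻¹ with hc_def
    have hc0 : 0 ≤ c := inv_nonneg.mpr hvpos.le
    have hw1 : ‖c • Tgrp E s u‖ = 1 := by
      rw [norm_smul, Real.norm_eq_abs, abs_of_nonneg hc0, hc_def]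
      field_simp
    have hz1 : ‖c • u‖ ≤ 1 := by
      rw [norm_smul, Real.norm_eq_abs, abs_of_nonneg hc0, hu, mul_one, hc_def]
      exact inv_le_one_of_one_le₀ hgt.le
    have heq : c • Tgrp E s u = Tgrp E s (c • u) := (_root_.map_smul _ _ _).symm
    have h4 : P (Tgrp E s (c • u)) = s * P (c • u) := hE s hs0 _
    have h5 : m ≤ P (Tgrp E s (c • u)) := by rw [← heq]; exact hsph _ hw1
    have h6 : P (c • u) ≤ M := hball _ hz1
    have h7 : s * M < m := (lt_div_iff₀ hM).mp hs
    nlinarith [mul_le_mul_of_nonneg_left h6 hs0.le]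
  -- claim 2 : quantitative contraction
  intro ε hε
  set ε' := min ε 1 with hε'_def
  have hε'0 : 0 < ε' := lt_min hε one_pos
  have hε'1 : ε' ≤ 1 := min_le_right _ _
  set K := Metric.closedBall (0 : EuclideanSpace ℝ (Fin d)) 1 ∩ {z | ε'/2 ≤ ‖z‖} with hK_def
  have hKc : IsCompact K := (isCompact_closedBall _ _).inter_right
    (isClosed_le continuous_const continuous_norm)
  have hKne : K.Nonempty := ⟨u₀, mem_closedBall_zero_iff.mpr hu₀n.le, by
    simp only [mem_setOf_eq, hu₀n]; linarith⟩
  obtain ⟨z₀, hz₀K, hminK⟩ := hKc.exists_isMinOn hKne hc.continuousOn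
  have hz₀ : z₀ ≠ 0 := by
    intro h
    have h2 := hz₀K.2
    simp only [mem_setOf_eq, h, norm_zero] at h2
    linarith
  have hμ : 0 < P z₀ := P_pos hnn hpd hz₀
  refine ⟨min (m/M) (P z₀/M), lt_min (div_pos hm hM) (div_pos hμ hM), ?_⟩
  intro s hs0 hsδ
  have hs1 : s < m/M := lt_of_lt_of_le hsδ (min_le_left _ _)
  have hs2 : s < P z₀/M := lt_of_lt_of_le hsδ (min_le_right _ _)
  have hub : ∀ u : EuclideanSpace ℝ (Fin d), ‖u‖ = 1 → ‖Tgrp E s u‖ ≤ ε'/2 := by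
    intro u hu
    have hle1 := claim1 s hs0 hs1 u hu
    by_contra hgt
    push_neg at hgt
    have hTK : Tgrp E s u ∈ K := ⟨mem_closedBall_zero_iff.mpr hle1, hgt.le⟩
    have h8 : P z₀ ≤ P (Tgrp E s u) := isMinOn_iff.mp hminK _ hTK
    have h9 : P (Tgrp E s u) = s * P u := hE s hs0 u
    have h10 : P u ≤ M := hball u hu.le
    have h11 : s * M < P z₀ := (lt_div_iff₀ hM).mp hs2
    nlinarith [mul_le_mul_of_nonneg_left h10 hs0.le]
  have h12 : ‖Tgrp E s‖ ≤ ε'/2 := opnorm_le_unit (by linarith) hub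
  have : ε'/2 < ε := by
    have := min_le_left ε 1
    linarith
  linarith

end main

section main2

variable {P : EuclideanSpace ℝ (Fin d) → ℝ}

lemma contracting_of_nontrivial (hc : Continuous P) (hnn : ∀ x, 0 ≤ P x)
    (hpd : ∀ x, P x = 0 → x = 0) {E : EuclideanSpace ℝ (Fin d) →L[ℝ] EuclideanSpace ℝ (Fin d)}
    (hE : IsExpOf P E) (hnt : Nontrivial (EuclideanSpace ℝ (Fin d))) :
    IsContracting E := by
  rw [IsContracting, Metric.tendsto_nhdsWithin_nhds]
  intro ε hε
  obtain ⟨δ, hδ, h⟩ := quant E hc hnn hpd hE hnt ε hε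
  refine ⟨δ, hδ, ?_⟩
  intro x hx hdist
  rw [Real.dist_eq, sub_zero] at hdist ⊢
  rw [abs_of_nonneg (norm_nonneg _)]
  exact h x hx (lt_of_abs_lt hdist)

lemma bound_of_nontrivial (hc : Continuous P) (hnn : ∀ x, 0 ≤ P x)
    (hpd : ∀ x, P x = 0 → x = 0) {E : EuclideanSpace ℝ (Fin d) →L[ℝ] EuclideanSpace ℝ (Fin d)}
    (hE : IsExpOf P E) (hnt : Nontrivial (EuclideanSpace ℝ (Fin d))) :
    ∃ M₀ : ℝ, 0 < M₀ ∧ ∀ x : EuclideanSpace ℝ (Fin d), M₀ ≤ ‖x‖ → 1 < P x := by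
  obtain ⟨u₀, hu₀, hmin⟩ := (isCompact_sphere (0 : EuclideanSpace ℝ (Fin d)) 1).exists_isMinOn
    (NormedSpace.sphere_nonempty.mpr zero_le_one) hc.continuousOn
  set m := P u₀ with hm_def
  have hu₀n : ‖u₀‖ = 1 := mem_sphere_zero_iff_norm.mp hu₀
  have hm : 0 < m := P_pos hnn hpd (by intro h; rw [h, norm_zero] at hu₀n; norm_num at hu₀n)
  have hsph : ∀ u : EuclideanSpace ℝ (Fin d), ‖u‖ = 1 → m ≤ P u :=
    fun u hu => isMinOn_iff.mp hmin u (mem_sphere_zero_iff_norm.mpr hu)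
  set b := max 1 m⁻¹ with hb_def
  have hb1 : (1:ℝ) ≤ b := le_max_left _ _
  have hIccsub : Icc (1:ℝ) b ⊆ Ioi 0 := fun σ hσ => lt_of_lt_of_le one_pos hσ.1
  have hcontC : ContinuousOn (fun σ : ℝ => ‖Tgrp E σ‖) (Icc 1 b) :=
    ((continuousOn_Tgrp E).mono hIccsub).norm
  obtain ⟨σ₁, hσ₁, hmaxC⟩ := isCompact_Icc.exists_isMaxOn ⟨1, left_mem_Icc.mpr hb1⟩ hcontC
  set C := ‖Tgrp E σ₁‖ with hC_def
  have hC0 : 0 ≤ C := norm_nonneg _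
  refine ⟨C + 1, by linarith, ?_⟩
  intro x hx
  by_contra hP1
  push_neg at hP1
  have hx0 : x ≠ 0 := by intro h; rw [h, norm_zero] at hx; linarith
  have hPx : 0 < P x := P_pos hnn hpd hx0
  obtain ⟨δ, hδ, hq⟩ := quant E hc hnn hpd hE hnt ((1 + ‖x‖)⁻¹) (by positivity)
  set s₁ := min (δ/2) (1/2 : ℝ) with hs₁_def
  have hs₁0 : 0 < s₁ := lt_min (by linarith) (by norm_num)
  have hs₁1 : s₁ ≤ 1/2 := min_le_right _ _
  have hfs₁ : ‖Tgrp E s₁ x‖ ≤ 1 := by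
    have h1 : ‖Tgrp E s₁‖ < (1 + ‖x‖)⁻¹ :=
      hq s₁ hs₁0 (lt_of_le_of_lt (min_le_left _ _) (by linarith))
    have h2 : (1 + ‖x‖)⁻¹ * ‖x‖ ≤ 1 := by
      rw [← div_eq_inv_mul]
      exact (div_le_one (by positivity)).mpr (by linarith)
    calc ‖Tgrp E s₁ x‖ ≤ ‖Tgrp E s₁‖ * ‖x‖ := (Tgrp E s₁).le_opNorm x
    _ ≤ (1 + ‖x‖)⁻¹ * ‖x‖ := mul_le_mul_of_nonneg_right h1.le (norm_nonneg x)
    _ ≤ 1 := h2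
  have hIcc2 : Icc s₁ (1:ℝ) ⊆ Ioi 0 := fun σ hσ => lt_of_lt_of_le hs₁0 hσ.1
  have hfc : ContinuousOn (fun σ : ℝ => ‖Tgrp E σ x‖) (Icc s₁ 1) := by
    apply ContinuousOn.norm
    exact ((ContinuousLinearMap.apply ℝ (EuclideanSpace ℝ (Fin d)) x).continuous.comp_continuousOn
      ((continuousOn_Tgrp E).mono hIcc2))
  have h1x : (1:ℝ) ≤ ‖x‖ := by linarith
  have h1mem : (1:ℝ) ∈ Icc (‖Tgrp E s₁ x‖) (‖Tgrp E 1 x‖) := by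
    constructor
    · exact hfs₁
    · rw [Tgrp_one_apply]; exact h1x
  obtain ⟨s, hsmem, hfs⟩ := intermediate_value_Icc (by linarith : s₁ ≤ (1:ℝ)) hfc h1mem
  have hs0 : 0 < s := lt_of_lt_of_le hs₁0 hsmem.1
  have hs_le1 : s ≤ 1 := hsmem.2
  have hPz : P (Tgrp E s x) = s * P x := hE s hs0 x
  have hm_le : m ≤ P (Tgrp E s x) := hsph _ hfs
  have hs_ge : m ≤ s := by nlinarith
  have hxz : Tgrp E s⁻¹ (Tgrp E s x) = x := Tgrp_inv_apply E hs0 x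
  have hσmem : s⁻¹ ∈ Icc (1:ℝ) b := by
    constructor
    · rw [le_inv_comm₀] <;> simp [hs0, hs_le1]
    · exact le_trans (inv_anti₀ hm hs_ge) (le_max_right _ _)
  have hfs' : ‖Tgrp E s x‖ = 1 := hfs
  have hxle : ‖x‖ ≤ C := by
    rw [← hxz]
    calc ‖Tgrp E s⁻¹ (Tgrp E s x)‖ ≤ ‖Tgrp E s⁻¹‖ * ‖Tgrp E s x‖ := (Tgrp E s⁻¹).le_opNorm _
    _ = ‖Tgrp E s⁻¹‖ := by rw [hfs', mul_one]
    _ ≤ C := isMaxOn_iff.mp hmaxC _ hσmem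
  linarith

end main2

section main3

variable {P : EuclideanSpace ℝ (Fin d) → ℝ}

lemma tendsto_cocompact_of_bound {E : EuclideanSpace ℝ (Fin d) →L[ℝ] EuclideanSpace ℝ (Fin d)}
    (hnn : ∀ x, 0 ≤ P x) (hpd : ∀ x, P x = 0 → x = 0) (hE : IsExpOf P E)
    {M₀ : ℝ} (hM₀ : 0 < M₀) (hB : ∀ x : EuclideanSpace ℝ (Fin d), M₀ ≤ ‖x‖ → 1 < P x) :
    Tendsto P (Filter.cocompact (EuclideanSpace ℝ (Fin d))) atTop := by
  rw [tendsto_atTop]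
  intro b
  set b' := max b 1 with hb'_def
  have hb'0 : (0:ℝ) < b' := lt_of_lt_of_le one_pos (le_max_right _ _)
  set R := ‖Tgrp E b'‖ * M₀ + 1 with hR_def
  have hR0 : 0 ≤ R := by positivity
  rw [Filter.hasBasis_cocompact.eventually_iff]
  refine ⟨Metric.closedBall 0 R, isCompact_closedBall _ _, ?_⟩
  intro x hx
  simp only [mem_compl_iff, Metric.mem_closedBall, dist_zero_right, not_le] at hx
  show b ≤ P x
  refine le_trans (le_max_left b 1) ?_
  by_contra hlt
  push_neg at hlt
  have hx0 : x ≠ 0 := by intro h; rw [h, norm_zero] at hx; linarith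
  have hPx : 0 < P x := P_pos hnn hpd hx0
  have hPz : P (Tgrp E b'⁻¹ x) = b'⁻¹ * P x := hE _ (inv_pos.mpr hb'0) x
  have hPz1 : P (Tgrp E b'⁻¹ x) < 1 := by
    rw [hPz, ← div_eq_inv_mul]
    exact (div_lt_one hb'0).mpr hlt
  have hz : ‖Tgrp E b'⁻¹ x‖ < M₀ := by
    by_contra h
    push_neg at h
    exact absurd (hB _ h) (by linarith)
  have hxz : Tgrp E b' (Tgrp E b'⁻¹ x) = x := Tgrp_inv_apply' E hb'0 x
  have hle : ‖x‖ ≤ ‖Tgrp E b'‖ * M₀ := by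
    rw [← hxz]
    calc ‖Tgrp E b' (Tgrp E b'⁻¹ x)‖ ≤ ‖Tgrp E b'‖ * ‖Tgrp E b'⁻¹ x‖ :=
      (Tgrp E b').le_opNorm _
    _ ≤ ‖Tgrp E b'‖ * M₀ := mul_le_mul_of_nonneg_left hz.le (norm_nonneg _)
  linarith

end main3

/-- For a continuous positive definite `P` with nonempty exponent set, the following are
equivalent: (a) `S = {P = 1}` is compact; (b) `P > 1` outside a ball; (c) every exponent
generates a contracting group; (d) some exponent generates a contracting group;
(e) `P(x) → ∞` as `|x| → ∞`. -/
theorem positive_homogeneous_characterization {d : ℕ}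
    (P : EuclideanSpace ℝ (Fin d) → ℝ)
    (hc : Continuous P) (hnn : ∀ x, 0 ≤ P x) (hpd : ∀ x, P x = 0 → x = 0)
    (hne : ∃ E, IsExpOf P E) :
    List.TFAE [
      IsCompact {η : EuclideanSpace ℝ (Fin d) | P η = 1},
      ∃ M : ℝ, 0 < M ∧ ∀ x : EuclideanSpace ℝ (Fin d), M ≤ ‖x‖ → 1 < P x,
      ∀ E, IsExpOf P E → IsContracting E,
      ∃ E, IsExpOf P E ∧ IsContracting E,
      Tendsto P (Filter.cocompact (EuclideanSpace ℝ (Fin d))) atTop] := by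
  obtain ⟨E₀, hE₀⟩ := hne
  rcases subsingleton_or_nontrivial (EuclideanSpace ℝ (Fin d)) with hsub | hnt
  · -- trivial space : all statements hold
    have h1 : IsCompact {η : EuclideanSpace ℝ (Fin d) | P η = 1} :=
      Set.subsingleton_of_subsingleton.finite.isCompact
    have h2 : ∃ M : ℝ, 0 < M ∧ ∀ x : EuclideanSpace ℝ (Fin d), M ≤ ‖x‖ → 1 < P x := by
      refine ⟨1, one_pos, ?_⟩
      intro x hx
      rw [Subsingleton.elim x 0, norm_zero] at hx
      norm_num at hx
    have h3 : ∀ E, IsExpOf P E → IsContracting E := by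
      intro E _
      have hz : ∀ r : ℝ, ‖Tgrp E r‖ = 0 := by
        intro r
        rw [Subsingleton.elim (Tgrp E r) 0, norm_zero]
      rw [IsContracting]
      simp only [hz]
      exact tendsto_const_nhds
    have h4 : ∃ E, IsExpOf P E ∧ IsContracting E := ⟨E₀, hE₀, h3 E₀ hE₀⟩
    have h5 : Tendsto P (Filter.cocompact (EuclideanSpace ℝ (Fin d))) atTop := by
      haveI : Finite (EuclideanSpace ℝ (Fin d)) := Finite.of_subsingleton
      haveI : CompactSpace (EuclideanSpace ℝ (Fin d)) := Finite.compactSpace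
      rw [Filter.cocompact_eq_bot]
      exact tendsto_bot
    apply List.tfae_of_forall True
    intro p hp
    simp only [List.mem_cons, List.not_mem_nil, or_false] at hp
    rcases hp with rfl|rfl|rfl|rfl|rfl
    exacts [iff_of_true h1 trivial, iff_of_true h2 trivial, iff_of_true h3 trivial,
      iff_of_true h4 trivial, iff_of_true h5 trivial]
  · have h3 : ∀ E, IsExpOf P E → IsContracting E :=
      fun E hE => contracting_of_nontrivial hc hnn hpd hE hnt
    have h4 : ∃ E, IsExpOf P E ∧ IsContracting E := ⟨E₀, hE₀, h3 E₀ hE₀⟩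
    obtain ⟨M₀, hM₀, hB⟩ := bound_of_nontrivial hc hnn hpd hE₀ hnt
    have h2 : ∃ M : ℝ, 0 < M ∧ ∀ x : EuclideanSpace ℝ (Fin d), M ≤ ‖x‖ → 1 < P x :=
      ⟨M₀, hM₀, hB⟩
    have h1 : IsCompact {η : EuclideanSpace ℝ (Fin d) | P η = 1} := by
      apply Metric.isCompact_of_isClosed_isBounded
      · exact isClosed_eq hc continuous_const
      · apply Bornology.IsBounded.subset (Metric.isBounded_closedBall (x := (0 : EuclideanSpace ℝ (Fin d))) (r := M₀))
        intro η hη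
        simp only [mem_setOf_eq] at hη
        rw [Metric.mem_closedBall, dist_zero_right]
        by_contra h
        push_neg at h
        exact absurd (hB η h.le) (by rw [hη]; norm_num)
    have h5 : Tendsto P (Filter.cocompact (EuclideanSpace ℝ (Fin d))) atTop :=
      tendsto_cocompact_of_bound hnn hpd hE₀ hM₀ hB
    apply List.tfae_of_forall True
    intro p hp
    simp only [List.mem_cons, List.not_mem_nil, or_false] at hp
    rcases hp with rfl|rfl|rfl|rfl|rfl
    exacts [iff_of_true h1 trivial, iff_of_true h2 trivial, iff_of_true h3 trivial,
      iff_of_true h4 trivial, iff_of_true h5 trivial]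
end

section
/- Let E ∈ End(R^d) generate a contracting group, let Q be a C^l function on a neighborhood of 0 (l ≥ 1) that is strongly subhomogeneous with respect to E of order l, and suppose Q(0) = 0. Then Q is subhomogeneous with respect to E. -/
open MeasureTheory Filter Set

/-- `Q` is subhomogeneous with respect to `E`. -/
def Subhom {d : ℕ} (Q : EuclideanSpace ℝ (Fin d) → ℂ)
    (E : EuclideanSpace ℝ (Fin d) →L[ℝ] EuclideanSpace ℝ (Fin d)) : Prop :=
  ∀ ε : ℝ, 0 < ε → ∀ K : Set (EuclideanSpace ℝ (Fin d)), IsCompact K →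
    ∃ δ : ℝ, 0 < δ ∧ ∀ r : ℝ, 0 < r → r < δ → ∀ ξ ∈ K, ‖Q (Tgrp E r ξ)‖ ≤ ε * r

/-- If `E` generates a contracting group, `Q` is `C^l` near `0` (`l ≥ 1`) and strongly
subhomogeneous with respect to `E` of order `l` (`|r^j ∂_r^j Q(r^E ξ)| ≤ ε r` for
`j = 1, …, l`), and `Q(0) = 0`, then `Q` is subhomogeneous with respect to `E`. -/
theorem strongly_subhomogeneous_implies_subhomogeneous {d : ℕ}
    (E : EuclideanSpace ℝ (Fin d) →L[ℝ] EuclideanSpace ℝ (Fin d)) (hE : IsContracting E)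
    (l : ℕ) (hl : 1 ≤ l)
    (Q : EuclideanSpace ℝ (Fin d) → ℂ)
    (U : Set (EuclideanSpace ℝ (Fin d))) (hU : U ∈ nhds (0 : EuclideanSpace ℝ (Fin d)))
    (hQl : ContDiffOn ℝ l Q U)
    (hstrong : ∀ ε : ℝ, 0 < ε → ∀ K : Set (EuclideanSpace ℝ (Fin d)), IsCompact K →
      ∃ δ : ℝ, 0 < δ ∧ ∀ j : ℕ, 1 ≤ j → j ≤ l → ∀ r : ℝ, 0 < r → r < δ → ∀ ξ ∈ K,
        r ^ j * ‖iteratedDeriv j (fun s : ℝ => Q (Tgrp E s ξ)) r‖ ≤ ε * r)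
    (hQ0 : Q 0 = 0) :
    Subhom Q E := by
  intro ε hε K hK
  obtain ⟨M₀, hM₀⟩ := hK.isBounded.exists_norm_le
  set M : ℝ := max M₀ 0 with hMdef
  have hM : ∀ ξ ∈ K, ‖ξ‖ ≤ M := fun ξ hξ => (hM₀ ξ hξ).trans (le_max_left _ _)
  have hM0 : (0:ℝ) ≤ M := le_max_right _ _
  obtain ⟨ρ, hρ, hball⟩ := Metric.mem_nhds_iff.mp hU
  -- δ₁ from contraction
  have hc : (0:ℝ) < ρ / (M + 1) := div_pos hρ (by linarith)
  have hev : ∀ᶠ s in nhdsWithin (0:ℝ) (Set.Ioi 0), ‖Tgrp E s‖ < ρ / (M + 1) :=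
    hE (Iio_mem_nhds hc)
  obtain ⟨δ₁, hδ₁, hδ₁'⟩ := Metric.mem_nhdsWithin_iff.mp hev
  -- for 0 < s < δ₁, ξ ∈ K : T_s ξ ∈ ball 0 ρ ⊆ U
  have hmem : ∀ s : ℝ, 0 < s → s < δ₁ → ∀ ξ ∈ K, Tgrp E s ξ ∈ Metric.ball (0:EuclideanSpace ℝ (Fin d)) ρ := by
    intro s hs hs' ξ hξ
    have hTs : ‖Tgrp E s‖ < ρ / (M + 1) := by
      apply hδ₁'
      constructor
      · simp [Real.dist_eq, abs_of_pos hs, hs']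
      · exact hs
    have h1 : ‖Tgrp E s ξ‖ ≤ ‖Tgrp E s‖ * ‖ξ‖ := (Tgrp E s).le_opNorm ξ
    have h2 : ‖Tgrp E s‖ * ‖ξ‖ ≤ (ρ / (M + 1)) * M := by
      apply mul_le_mul hTs.le (hM ξ hξ) (norm_nonneg _) hc.le
    have h3 : (ρ / (M + 1)) * M < ρ := by
      rw [div_mul_eq_mul_div, div_lt_iff₀ (by linarith : (0:ℝ) < M + 1)]
      nlinarith
    simp only [Metric.mem_ball, dist_zero_right]
    linarith
  -- δ₂ from hstrong
  obtain ⟨δ₂, hδ₂, hδ₂'⟩ := hstrong ε hε K hK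
  refine ⟨min δ₁ δ₂, lt_min hδ₁ hδ₂, ?_⟩
  intro r hr hrδ ξ hξ
  have hrδ₁ : r < δ₁ := hrδ.trans_le (min_le_left _ _)
  have hrδ₂ : r < δ₂ := hrδ.trans_le (min_le_right _ _)
  set f : ℝ → ℂ := fun s => Q (Tgrp E s ξ) with hf
  -- differentiability of f on (0, δ₁)
  have hdiff : ∀ s ∈ Set.Ioo (0:ℝ) δ₁, DifferentiableAt ℝ f s := by
    intro s hs
    have hg : DifferentiableAt ℝ (fun s : ℝ => Tgrp E s ξ) s := by
      have h2 : DifferentiableAt ℝ (fun t : ℝ => NormedSpace.exp (t • E)) (Real.log s) :=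
        (hasDerivAt_exp_smul_const E (Real.log s)).differentiableAt
      have h1 : DifferentiableAt ℝ Real.log s := Real.differentiableAt_log (ne_of_gt hs.1)
      have := (h2.comp s h1).clm_apply (differentiableAt_const ξ)
      simpa [Tgrp] using this
    have hQd : DifferentiableAt ℝ Q (Tgrp E s ξ) := by
      have hsub : Metric.ball (0:EuclideanSpace ℝ (Fin d)) ρ ⊆ U := hball
      have hQ' : DifferentiableOn ℝ Q (Metric.ball (0:EuclideanSpace ℝ (Fin d)) ρ) :=
        ((hQl.mono hsub).differentiableOn (by exact_mod_cast (Nat.one_le_iff_ne_zero.mp hl)))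
      exact hQ'.differentiableAt (Metric.isOpen_ball.mem_nhds (hmem s hs.1 hs.2 ξ hξ))
    exact hQd.comp s hg
  -- derivative bound on (0, min δ₁ δ₂)
  have hbound : ∀ s ∈ Set.Ioo (0:ℝ) (min δ₁ δ₂), ‖deriv f s‖ ≤ ε := by
    intro s hs
    have h := hδ₂' 1 le_rfl hl s hs.1 (hs.2.trans_le (min_le_right _ _)) ξ hξ
    rw [pow_one, iteratedDeriv_one] at h
    exact le_of_mul_le_mul_left (by linarith) hs.1
  -- mean value inequality on Ioo 0 (min δ₁ δ₂)
  have hconv : Convex ℝ (Set.Ioo (0:ℝ) (min δ₁ δ₂)) := convex_Ioo _ _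
  have hmvt : ∀ x ∈ Set.Ioo (0:ℝ) (min δ₁ δ₂), ∀ y ∈ Set.Ioo (0:ℝ) (min δ₁ δ₂),
      ‖f y - f x‖ ≤ ε * ‖y - x‖ := by
    intro x hx y hy
    exact hconv.norm_image_sub_le_of_norm_deriv_le
      (fun z hz => (hdiff z ⟨hz.1, hz.2.trans_le (min_le_left _ _)⟩))
      (fun z hz => hbound z hz) hx hy
  -- limit of f at 0⁺
  have hlim : Tendsto f (nhdsWithin (0:ℝ) (Set.Ioi 0)) (nhds 0) := by
    have hg0 : Tendsto (fun s : ℝ => Tgrp E s ξ) (nhdsWithin (0:ℝ) (Set.Ioi 0))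
        (nhds (0:EuclideanSpace ℝ (Fin d))) := by
      rw [tendsto_zero_iff_norm_tendsto_zero]
      apply squeeze_zero (fun s => norm_nonneg _) (fun s => (Tgrp E s).le_opNorm ξ)
      have h := hE.mul_const ‖ξ‖
      rw [zero_mul] at h
      exact h
    have hQc : ContinuousAt Q 0 := hQl.continuousOn.continuousAt hU
    have := (hQc.tendsto.comp hg0)
    rwa [hQ0] at this
  -- conclude
  have hrmem : r ∈ Set.Ioo (0:ℝ) (min δ₁ δ₂) := ⟨hr, hrδ⟩
  have hIoo : Set.Ioo (0:ℝ) r ∈ nhdsWithin (0:ℝ) (Set.Ioi 0) :=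
    Ioo_mem_nhdsGT_of_mem ⟨le_refl _, hr⟩
  have hev2 : ∀ᶠ r₀ in nhdsWithin (0:ℝ) (Set.Ioi 0), ‖f r - f r₀‖ ≤ ε * r := by
    filter_upwards [hIoo] with r₀ hr₀
    have hr₀mem : r₀ ∈ Set.Ioo (0:ℝ) (min δ₁ δ₂) := ⟨hr₀.1, hr₀.2.trans hrδ⟩
    have := hmvt r₀ hr₀mem r hrmem
    have habs : ‖r - r₀‖ ≤ r := by
      rw [Real.norm_eq_abs, abs_of_pos (by linarith [hr₀.2] : (0:ℝ) < r - r₀)]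
      linarith [hr₀.1]
    calc ‖f r - f r₀‖ ≤ ε * ‖r - r₀‖ := this
      _ ≤ ε * r := by nlinarith
  have htend : Tendsto (fun r₀ => ‖f r - f r₀‖) (nhdsWithin (0:ℝ) (Set.Ioi 0))
      (nhds ‖f r - 0‖) :=
    (tendsto_const_nhds.sub hlim).norm
  have := le_of_tendsto htend hev2
  simpa using this
end
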